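/- Let c₁, c₂ ∈ ℝ with 0 < c₁ < c₂ and define f : ℝ² → ℝ by f(x,y) := (y − c₁x²)(y − c₂x²). Then f has a strict saddle point at (0,0). -/

import Mathlib

open Set Filter Topology

/-- `γ : [a, b] → D` is a regular path in `D`: it is continuous on `[a, b]`, maps `[a, b]`
into `D`, is differentiable on `(a, b)`, and its derivative is nonvanishing on `(a, b)`. -/
def IsRegularPath (D : Set (ℝ × ℝ)) (γ : ℝ → ℝ × ℝ) (a b : ℝ) : Prop :=
  a < b ∧ ContinuousOn γ (Set.Icc a b) ∧ Set.MapsTo γ (Set.Icc a b) D ∧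
    ∀ t ∈ Set.Ioo a b, DifferentiableAt ℝ γ t ∧ deriv γ t ≠ 0

/-- A function of one real variable has a strict local maximum at `t`. -/
def IsStrictLocalMax (g : ℝ → ℝ) (t : ℝ) : Prop :=
  ∀ᶠ s in 𝓝[≠] t, g s < g t

/-- A function of one real variable has a strict local minimum at `t`. -/
def IsStrictLocalMin (g : ℝ → ℝ) (t : ℝ) : Prop :=
  ∀ᶠ s in 𝓝[≠] t, g t < g s

/-- `f` has a saddle point at `p`: there are regular paths `γ₁, γ₂` in `D` passing through `p`
and intersecting transversally at `p` (their tangent vectors at `p` are not multiples of each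
other) such that `f` has a local maximum at `p` along `γ₁` and a local minimum at `p`
along `γ₂`. -/
def HasSaddleAt (D : Set (ℝ × ℝ)) (f : ℝ × ℝ → ℝ) (p : ℝ × ℝ) : Prop :=
  ∃ (a₁ b₁ a₂ b₂ t₁ t₂ : ℝ) (γ₁ γ₂ : ℝ → ℝ × ℝ),
    IsRegularPath D γ₁ a₁ b₁ ∧ IsRegularPath D γ₂ a₂ b₂ ∧
    t₁ ∈ Set.Ioo a₁ b₁ ∧ t₂ ∈ Set.Ioo a₂ b₂ ∧ γ₁ t₁ = p ∧ γ₂ t₂ = p ∧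
    (∀ c : ℝ, deriv γ₁ t₁ ≠ c • deriv γ₂ t₂) ∧
    (∀ c : ℝ, deriv γ₂ t₂ ≠ c • deriv γ₁ t₁) ∧
    IsLocalMax (f ∘ γ₁) t₁ ∧ IsLocalMin (f ∘ γ₂) t₂

/-- `f` has a strict saddle point at `p`: as for a saddle point, but with a strict local
maximum along `γ₁` and a strict local minimum along `γ₂`. -/
def HasStrictSaddleAt (D : Set (ℝ × ℝ)) (f : ℝ × ℝ → ℝ) (p : ℝ × ℝ) : Prop :=
  ∃ (a₁ b₁ a₂ b₂ t₁ t₂ : ℝ) (γ₁ γ₂ : ℝ → ℝ × ℝ),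
    IsRegularPath D γ₁ a₁ b₁ ∧ IsRegularPath D γ₂ a₂ b₂ ∧
    t₁ ∈ Set.Ioo a₁ b₁ ∧ t₂ ∈ Set.Ioo a₂ b₂ ∧ γ₁ t₁ = p ∧ γ₂ t₂ = p ∧
    (∀ c : ℝ, deriv γ₁ t₁ ≠ c • deriv γ₂ t₂) ∧
    (∀ c : ℝ, deriv γ₂ t₂ ≠ c • deriv γ₁ t₁) ∧
    IsStrictLocalMax (f ∘ γ₁) t₁ ∧ IsStrictLocalMin (f ∘ γ₂) t₂

/-- For `0 < c₁ < c₂`, the function `f(x, y) = (y - c₁x²)(y - c₂x²)` has a strict saddle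
point at the origin. -/
theorem two_parabolas_strict_saddle (c₁ c₂ : ℝ) (h0 : 0 < c₁) (h12 : c₁ < c₂) :
    HasStrictSaddleAt Set.univ
      (fun q : ℝ × ℝ => (q.2 - c₁ * q.1 ^ 2) * (q.2 - c₂ * q.1 ^ 2)) (0, 0) := by
  set m : ℝ := (c₁ + c₂) / 2 with hm
  have hm1 : c₁ < m := by simp only [hm]; linarith
  have hm2 : m < c₂ := by simp only [hm]; linarith
  set γ₁ : ℝ → ℝ × ℝ := fun t => (t, m * t ^ 2) with hγ₁
  set γ₂ : ℝ → ℝ × ℝ := fun t => ((0 : ℝ), t) with hγ₂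
  have hd1 : ∀ t : ℝ, HasDerivAt γ₁ (1, 2 * m * t) t := by
    intro t
    have h := (hasDerivAt_id t).prodMk (((hasDerivAt_pow 2 t)).const_mul m)
    convert h using 2 <;> first | rfl | ring
  have hd2 : ∀ t : ℝ, HasDerivAt γ₂ ((0 : ℝ), (1 : ℝ)) t := fun t =>
    (hasDerivAt_const t (0 : ℝ)).prodMk (hasDerivAt_id t)
  have hD1 : deriv γ₁ 0 = ((1 : ℝ), (0 : ℝ)) := by
    have := (hd1 0).deriv; simpa using this
  have hD2 : deriv γ₂ 0 = ((0 : ℝ), (1 : ℝ)) := (hd2 0).deriv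
  refine ⟨-1, 1, -1, 1, 0, 0, γ₁, γ₂, ?_, ?_, by norm_num, by norm_num, by simp [hγ₁],
    by simp [hγ₂], ?_, ?_, ?_, ?_⟩
  · refine ⟨by norm_num, ?_, fun t _ => trivial, fun t _ => ?_⟩
    · exact fun t _ => ((hd1 t).continuousAt).continuousWithinAt
    · refine ⟨(hd1 t).differentiableAt, ?_⟩
      rw [(hd1 t).deriv]
      intro h
      have := congrArg Prod.fst h
      norm_num at this
  · refine ⟨by norm_num, ?_, fun t _ => trivial, fun t _ => ?_⟩
    · exact fun t _ => ((hd2 t).continuousAt).continuousWithinAt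
    · refine ⟨(hd2 t).differentiableAt, ?_⟩
      rw [(hd2 t).deriv]
      intro h
      have := congrArg Prod.snd h
      norm_num at this
  · intro c h
    rw [hD1, hD2] at h
    have := congrArg Prod.fst h
    simp at this
  · intro c h
    rw [hD1, hD2] at h
    have := congrArg Prod.snd h
    simp at this
  · filter_upwards [self_mem_nhdsWithin] with s hs
    have hs0 : s ≠ 0 := hs
    simp only [Function.comp, hγ₁]
    have h4 : (0:ℝ) < s ^ 4 := by positivity
    have : (m * s ^ 2 - c₁ * s ^ 2) * (m * s ^ 2 - c₂ * s ^ 2)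
        = ((m - c₁) * (m - c₂)) * s ^ 4 := by ring
    have hneg : ((m - c₁) * (m - c₂)) * s ^ 4 < 0 := by
      apply mul_neg_of_neg_of_pos _ h4
      exact mul_neg_of_pos_of_neg (by linarith) (by linarith)
    simp only [this]
    simpa using hneg
  · filter_upwards [self_mem_nhdsWithin] with s hs
    have hs0 : s ≠ 0 := hs
    simp only [Function.comp, hγ₂]
    have h2 : (0:ℝ) < s * s := by
      rcases hs0.lt_or_gt with h | h
      · exact mul_pos_of_neg_of_neg h h
      · exact mul_pos h h
    nlinarith
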